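/- Let G be a finite simple regular graph with at least one vertex, and let 𝔠 be a set of cliques of G such that: (i) every edge of G is contained in some member of 𝔠; (ii) every vertex of G is contained in at most three members of 𝔠; (iii) whenever two distinct members C, C′ of 𝔠 contain two common distinct vertices u and v, then C and C′ are the only members of 𝔠 containing u, they are the only members of 𝔠 containing v, and C ∩ C′ = {u, v}. Then there exists a vertex u of G such that every vertex v non-adjacent to u and distinct from u satisfies |N(u) ∩ N(v)| ≤ 9, where N(x) denotes the set of neighbors of x. -/

import Mathlib

open Finset

/-- `G` is μ-bounded with parameter `c`: every pair of distinct non-adjacent vertices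
has at most `c` common neighbors. -/
def MuBounded {V : Type*} [Fintype V] [DecidableEq V] (G : SimpleGraph V)
    [DecidableRel G.Adj] (c : ℕ) : Prop :=
  ∀ u v : V, u ≠ v → ¬ G.Adj u v →
    ((G.neighborFinset u) ∩ (G.neighborFinset v)).card ≤ c

/-- `s` is a maximal clique of `G`. -/
def IsMaximalCliqueF {V : Type*} (G : SimpleGraph V) (s : Finset V) : Prop :=
  G.IsClique (s : Set V) ∧ ∀ t : Finset V, G.IsClique (t : Set V) → s ⊆ t → s = t

/-- Every (real) eigenvalue of the adjacency matrix of `G` is at least `r`,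
i.e. `λ_min(G) ≥ r`. -/
def MinEigGE {V : Type*} [Fintype V] [DecidableEq V] (G : SimpleGraph V)
    [DecidableRel G.Adj] (r : ℝ) : Prop :=
  ∀ μ ∈ spectrum ℝ (G.adjMatrix ℝ), r ≤ μ
theorem statement11 {V : Type*} [Fintype V] [DecidableEq V] [Nonempty V]
    (G : SimpleGraph V) [DecidableRel G.Adj]
    (hreg : ∃ k, G.IsRegularOfDegree k)
    (𝔠 : Finset (Finset V))
    (hclique : ∀ C ∈ 𝔠, G.IsClique (C : Set V))
    (hedge : ∀ u v : V, G.Adj u v → ∃ C ∈ 𝔠, u ∈ C ∧ v ∈ C)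
    (hthree : ∀ v : V, (𝔠.filter (fun C => v ∈ C)).card ≤ 3)
    (hinter : ∀ C ∈ 𝔠, ∀ C' ∈ 𝔠, C ≠ C' → ∀ u v : V, u ≠ v →
      u ∈ C → u ∈ C' → v ∈ C → v ∈ C' →
        (∀ D ∈ 𝔠, u ∈ D → D = C ∨ D = C') ∧
        (∀ D ∈ 𝔠, v ∈ D → D = C ∨ D = C') ∧
        C ∩ C' = {u, v}) :
    ∃ u : V, ∀ v : V, v ≠ u → ¬ G.Adj u v →
      ((G.neighborFinset u) ∩ (G.neighborFinset v)).card ≤ 9 := by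
  classical
  obtain ⟨k, hreg'⟩ := hreg
  -- helper: neighborhood of a vertex contained in (at most) two cliques A, B
  have hnb : ∀ (x : V) (A B : Finset V), A ∈ 𝔠 → B ∈ 𝔠 → x ∈ A → x ∈ B →
      (∀ F ∈ 𝔠, x ∈ F → F = A ∨ F = B) → G.neighborFinset x = (A ∪ B).erase x := by
    intro x A B hA hB hxA hxB honly
    ext y
    simp only [SimpleGraph.mem_neighborFinset, mem_erase, mem_union]
    constructor
    · intro hadj
      obtain ⟨F, hF, hxF, hyF⟩ := hedge x y hadj
      refine ⟨(G.ne_of_adj hadj).symm, ?_⟩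
      rcases honly F hF hxF with rfl | rfl
      · exact Or.inl hyF
      · exact Or.inr hyF
    · rintro ⟨hyx, hy | hy⟩
      · exact hclique A hA hxA hy (Ne.symm hyx)
      · exact hclique B hB hxB hy (Ne.symm hyx)
  by_cases hsmall : ∀ C ∈ 𝔠, ∀ D ∈ 𝔠, C ≠ D → (C ∩ D).card ≤ 1
  · -- easy case: any vertex works
    obtain ⟨u⟩ := ‹Nonempty V›
    refine ⟨u, fun v hvu hnadj => ?_⟩
    set S := G.neighborFinset u ∩ G.neighborFinset v with hS
    have hmap : ∀ w ∈ S, ∃ CD : Finset V × Finset V,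
        (CD.1 ∈ 𝔠 ∧ u ∈ CD.1 ∧ w ∈ CD.1) ∧ (CD.2 ∈ 𝔠 ∧ v ∈ CD.2 ∧ w ∈ CD.2) := by
      intro w hw
      rw [hS, mem_inter, SimpleGraph.mem_neighborFinset, SimpleGraph.mem_neighborFinset] at hw
      obtain ⟨C, hC, hC1, hC2⟩ := hedge u w hw.1
      obtain ⟨D, hD, hD1, hD2⟩ := hedge v w hw.2
      exact ⟨(C, D), ⟨hC, hC1, hC2⟩, ⟨hD, hD1, hD2⟩⟩
    choose f hf using hmap
    have hcard : S.card ≤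
        ((𝔠.filter (fun C => u ∈ C)) ×ˢ (𝔠.filter (fun C => v ∈ C))).card := by
      refine Finset.card_le_card_of_injOn
        (fun w => if h : w ∈ S then f w h else (∅, ∅)) (fun w hw => ?_) ?_
      · simp only [dif_pos (show w ∈ S from hw)]
        obtain ⟨⟨hC, hu, hwC⟩, ⟨hD, hv, hwD⟩⟩ := hf w hw
        exact mem_product.mpr ⟨mem_filter.mpr ⟨hC, hu⟩, mem_filter.mpr ⟨hD, hv⟩⟩
      · intro a ha b hb heq
        rw [mem_coe] at ha hb
        simp only [dif_pos ha, dif_pos hb] at heq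
        obtain ⟨⟨hCa, hua, haC⟩, ⟨hDa, hva, haD⟩⟩ := hf a ha
        obtain ⟨⟨hCb, hub, hbC⟩, ⟨hDb, hvb, hbD⟩⟩ := hf b hb
        have h1 : (f a ha).1 = (f b hb).1 := by rw [heq]
        have h2 : (f a ha).2 = (f b hb).2 := by rw [heq]
        by_contra hab
        have hCD : (f a ha).1 ≠ (f a ha).2 := by
          intro h
          have : G.Adj u v := hclique _ hCa hua (h ▸ hva) hvu.symm
          exact hnadj this
        have h2le : 1 < ((f a ha).1 ∩ (f a ha).2).card :=
          Finset.one_lt_card.mpr ⟨a, mem_inter.mpr ⟨haC, haD⟩,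
            b, mem_inter.mpr ⟨h1 ▸ hbC, h2 ▸ hbD⟩, hab⟩
        have := hsmall _ hCa _ hDa hCD
        omega
    have h9 : ((𝔠.filter (fun C => u ∈ C)) ×ˢ (𝔠.filter (fun C => v ∈ C))).card ≤ 9 := by
      rw [Finset.card_product]
      have h1 := hthree u
      have h2 := hthree v
      calc (𝔠.filter (fun C => u ∈ C)).card * (𝔠.filter (fun C => v ∈ C)).card
          ≤ 3 * 3 := Nat.mul_le_mul h1 h2
        _ = 9 := rfl
    exact le_trans hcard h9
  · -- hard case
    push_neg at hsmall
    obtain ⟨C, hC, D, hD, hCD, hlt⟩ := hsmall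
    obtain ⟨w₁, hw₁, w₂, hw₂, hw12⟩ := Finset.one_lt_card.mp hlt
    obtain ⟨hw1C, hw1D⟩ := mem_inter.mp hw₁
    obtain ⟨hw2C, hw2D⟩ := mem_inter.mp hw₂
    obtain ⟨honly1, honly2, hCDeq⟩ :=
      hinter C hC D hD hCD w₁ w₂ hw12 hw1C hw1D hw2C hw2D
    refine ⟨w₁, fun v' hv' hnadj => ?_⟩
    by_contra hle
    push_neg at hle
    have hcard10 : 10 ≤ ((G.neighborFinset w₁) ∩ (G.neighborFinset v')).card := hle
    set S := (G.neighborFinset w₁) ∩ (G.neighborFinset v') with hSdef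
    have hnw1 : G.neighborFinset w₁ = (C ∪ D).erase w₁ := hnb w₁ C D hC hD hw1C hw1D honly1
    have hSCD : S ⊆ C ∪ D := fun w hw => by
      have := (mem_inter.mp hw).1
      rw [hnw1] at this
      exact mem_of_mem_erase this
    have hv'C : v' ∉ C := fun h => hnadj (hclique C hC hw1C h (Ne.symm hv'))
    have hv'D : v' ∉ D := fun h => hnadj (hclique D hD hw1D h (Ne.symm hv'))
    set 𝒟 := 𝔠.filter (fun E => v' ∈ E) with h𝒟def
    have h𝒟mem : ∀ E ∈ 𝒟, E ∈ 𝔠 ∧ v' ∈ E := fun E hE => mem_filter.mp hE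
    have hCne : ∀ E ∈ 𝒟, C ≠ E := by
      rintro E hE rfl; exact hv'C (h𝒟mem _ hE).2
    have hDne : ∀ E ∈ 𝒟, D ≠ E := by
      rintro E hE rfl; exact hv'D (h𝒟mem _ hE).2
    have hCE2 : ∀ E ∈ 𝒟, (C ∩ E).card ≤ 2 := by
      intro E hE
      by_contra h
      push_neg at h
      obtain ⟨a, ha, b, hb, hab⟩ := Finset.one_lt_card.mp (by omega : 1 < (C ∩ E).card)
      obtain ⟨haC, haE⟩ := mem_inter.mp ha
      obtain ⟨hbC, hbE⟩ := mem_inter.mp hb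
      obtain ⟨-, -, heq⟩ := hinter C hC E (h𝒟mem E hE).1 (hCne E hE) a b hab haC haE hbC hbE
      rw [heq, card_pair hab] at h
      omega
    have hDE2 : ∀ E ∈ 𝒟, (D ∩ E).card ≤ 2 := by
      intro E hE
      by_contra h
      push_neg at h
      obtain ⟨a, ha, b, hb, hab⟩ := Finset.one_lt_card.mp (by omega : 1 < (D ∩ E).card)
      obtain ⟨haD, haE⟩ := mem_inter.mp ha
      obtain ⟨hbD, hbE⟩ := mem_inter.mp hb
      obtain ⟨-, -, heq⟩ := hinter D hD E (h𝒟mem E hE).1 (hDne E hE) a b hab haD haE hbD hbE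
      rw [heq, card_pair hab] at h
      omega
    have hSE : ∀ E ∈ 𝒟, (S ∩ E).card ≤ (C ∩ E).card + (D ∩ E).card := by
      intro E hE
      have hsub : S ∩ E ⊆ (C ∩ E) ∪ (D ∩ E) := by
        intro x hx
        obtain ⟨hxS, hxE⟩ := mem_inter.mp hx
        rcases mem_union.mp (hSCD hxS) with h | h
        · exact mem_union.mpr (Or.inl (mem_inter.mpr ⟨h, hxE⟩))
        · exact mem_union.mpr (Or.inr (mem_inter.mpr ⟨h, hxE⟩))
      exact le_trans (card_le_card hsub) (card_union_le _ _)
    have hScover : S.card ≤ ∑ E ∈ 𝒟, (S ∩ E).card := by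
      refine le_trans (card_le_card ?_) (Finset.card_biUnion_le)
      intro w hw
      have hadj : G.Adj v' w := by
        have := (mem_inter.mp hw).2
        rwa [SimpleGraph.mem_neighborFinset] at this
      obtain ⟨F, hF, hv'F, hwF⟩ := hedge v' w hadj
      exact mem_biUnion.mpr ⟨F, mem_filter.mpr ⟨hF, hv'F⟩, mem_inter.mpr ⟨hw, hwF⟩⟩
    have h𝒟card : 𝒟.card = 3 := by
      have h3 : 𝒟.card ≤ 3 := by rw [h𝒟def]; exact hthree v'
      by_contra h
      have h2 : 𝒟.card ≤ 2 := by omega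
      have hle4 : ∑ E ∈ 𝒟, (S ∩ E).card ≤ 𝒟.card • 4 := by
        refine Finset.sum_le_card_nsmul _ _ _ ?_
        intro E hE
        have := hSE E hE; have := hCE2 E hE; have := hDE2 E hE
        omega
      rw [smul_eq_mul] at hle4
      omega
    obtain ⟨E1, E2, E3, h12, h13, h23, h𝒟eq⟩ := Finset.card_eq_three.mp h𝒟card
    have hE1 : E1 ∈ 𝒟 := by rw [h𝒟eq]; simp
    have hE2 : E2 ∈ 𝒟 := by rw [h𝒟eq]; simp
    have hE3 : E3 ∈ 𝒟 := by rw [h𝒟eq]; simp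
    -- pairwise intersections of cliques through v'
    have hpair : ∀ E ∈ 𝒟, ∀ E' ∈ 𝒟, E ≠ E' → E ∩ E' = {v'} := by
      intro E hE E' hE' hEE'
      have hnsub : ¬ 𝒟 ⊆ {E, E'} := by
        intro hsub
        have h1 := card_le_card hsub
        have h2 : ({E, E'} : Finset (Finset V)).card ≤ 2 :=
          le_trans (card_insert_le _ _) (by simp)
        omega
      obtain ⟨F, hF𝒟, hF⟩ := not_subset.mp hnsub
      simp only [mem_insert, mem_singleton, not_or] at hF
      apply Finset.Subset.antisymm
      · intro x hx
        obtain ⟨hxE, hxE'⟩ := mem_inter.mp hx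
        rw [mem_singleton]
        by_contra hxv
        have hvx : v' ≠ x := fun h => hxv h.symm
        obtain ⟨h1, -, -⟩ := hinter E (h𝒟mem E hE).1 E' (h𝒟mem E' hE').1 hEE' v' x hvx
          (h𝒟mem E hE).2 (h𝒟mem E' hE').2 hxE hxE'
        rcases h1 F (h𝒟mem F hF𝒟).1 (h𝒟mem F hF𝒟).2 with rfl | rfl
        · exact hF.1 rfl
        · exact hF.2 rfl
      · rw [singleton_subset_iff]
        exact mem_inter.mpr ⟨(h𝒟mem E hE).2, (h𝒟mem E' hE').2⟩
    -- degree of v' in terms of the three cliques through it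
    have hsumgen : ∀ F1 F2 F3 : Finset V, F1 ∈ 𝒟 → F2 ∈ 𝒟 → F3 ∈ 𝒟 →
        F1 ≠ F2 → F1 ≠ F3 → F2 ≠ F3 → F1.card + F2.card + F3.card = k + 3 := by
      intro F1 F2 F3 hF1 hF2 hF3 d12 d13 d23
      have heq𝒟 : ({F1, F2, F3} : Finset (Finset V)) = 𝒟 := by
        apply Finset.eq_of_subset_of_card_le
        · intro F hF
          simp only [mem_insert, mem_singleton] at hF
          rcases hF with rfl | rfl | rfl <;> assumption
        · rw [h𝒟card]
          rw [card_insert_of_notMem (by simp [d12, d13]),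
            card_insert_of_notMem (by simp [d23]), card_singleton]
      have hnv' : G.neighborFinset v' = ((F1 ∪ F2) ∪ F3).erase v' := by
        ext y
        simp only [SimpleGraph.mem_neighborFinset, mem_erase, mem_union]
        constructor
        · intro hadj
          obtain ⟨F, hF, hv'F, hyF⟩ := hedge v' y hadj
          refine ⟨(G.ne_of_adj hadj).symm, ?_⟩
          have hF𝒟 : F ∈ 𝒟 := mem_filter.mpr ⟨hF, hv'F⟩
          rw [← heq𝒟] at hF𝒟
          simp only [mem_insert, mem_singleton] at hF𝒟
          rcases hF𝒟 with rfl | rfl | rfl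
          · exact Or.inl (Or.inl hyF)
          · exact Or.inl (Or.inr hyF)
          · exact Or.inr hyF
        · rintro ⟨hyv, (hy | hy) | hy⟩
          · exact hclique F1 (h𝒟mem F1 hF1).1 (h𝒟mem F1 hF1).2 hy (Ne.symm hyv)
          · exact hclique F2 (h𝒟mem F2 hF2).1 (h𝒟mem F2 hF2).2 hy (Ne.symm hyv)
          · exact hclique F3 (h𝒟mem F3 hF3).1 (h𝒟mem F3 hF3).2 hy (Ne.symm hyv)
      have h12' : (F1 ∩ F2).card = 1 := by rw [hpair F1 hF1 F2 hF2 d12]; simp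
      have hu12 := card_union_add_card_inter F1 F2
      have hint3 : ((F1 ∪ F2) ∩ F3).card = 1 := by
        rw [union_inter_distrib_right, hpair F1 hF1 F3 hF3 d13, hpair F2 hF2 F3 hF3 d23]
        simp
      have hu123 := card_union_add_card_inter (F1 ∪ F2) F3
      have hv'mem : v' ∈ (F1 ∪ F2) ∪ F3 :=
        mem_union.mpr (Or.inl (mem_union.mpr (Or.inl (h𝒟mem F1 hF1).2)))
      have herase := card_erase_add_one hv'mem
      have hdeg : (G.neighborFinset v').card = k := hreg' v'
      rw [hnv'] at hdeg
      omega
    -- degree of w₁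
    have hkCD : C.card + D.card = k + 3 := by
      have hCDcard : (C ∩ D).card = 2 := by rw [hCDeq]; exact card_pair hw12
      have hu := card_union_add_card_inter C D
      have hw1mem : w₁ ∈ C ∪ D := mem_union.mpr (Or.inl hw1C)
      have herase := card_erase_add_one hw1mem
      have hdeg : (G.neighborFinset w₁).card = k := hreg' w₁
      rw [hnw1] at hdeg
      omega
    -- if |C ∩ E| = 2 then |C| + |E| = k + 3
    have hCEeq : ∀ E ∈ 𝒟, (C ∩ E).card = 2 → C.card + E.card = k + 3 := by
      intro E hE h2
      obtain ⟨a, b, hab, habs⟩ := Finset.card_eq_two.mp h2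
      have ha : a ∈ C ∩ E := by rw [habs]; simp
      have hb : b ∈ C ∩ E := by rw [habs]; simp
      obtain ⟨haC, haE⟩ := mem_inter.mp ha
      obtain ⟨hbC, hbE⟩ := mem_inter.mp hb
      obtain ⟨haonly, -, -⟩ := hinter C hC E (h𝒟mem E hE).1 (hCne E hE) a b hab haC haE hbC hbE
      have hna : G.neighborFinset a = (C ∪ E).erase a :=
        hnb a C E hC (h𝒟mem E hE).1 haC haE haonly
      have hu := card_union_add_card_inter C E
      have hamem : a ∈ C ∪ E := mem_union.mpr (Or.inl haC)
      have herase := card_erase_add_one hamem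
      have hdeg : (G.neighborFinset a).card = k := hreg' a
      rw [hna] at hdeg
      omega
    have hDEeq : ∀ E ∈ 𝒟, (D ∩ E).card = 2 → D.card + E.card = k + 3 := by
      intro E hE h2
      obtain ⟨a, b, hab, habs⟩ := Finset.card_eq_two.mp h2
      have ha : a ∈ D ∩ E := by rw [habs]; simp
      have hb : b ∈ D ∩ E := by rw [habs]; simp
      obtain ⟨haD, haE⟩ := mem_inter.mp ha
      obtain ⟨hbD, hbE⟩ := mem_inter.mp hb
      obtain ⟨haonly, -, -⟩ := hinter D hD E (h𝒟mem E hE).1 (hDne E hE) a b hab haD haE hbD hbE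
      have hna : G.neighborFinset a = (D ∪ E).erase a :=
        hnb a D E hD (h𝒟mem E hE).1 haD haE haonly
      have hu := card_union_add_card_inter D E
      have hamem : a ∈ D ∪ E := mem_union.mpr (Or.inl haD)
      have herase := card_erase_add_one hamem
      have hdeg : (G.neighborFinset a).card = k := hreg' a
      rw [hna] at hdeg
      omega
    have hpos : ∀ E ∈ 𝒟, 1 ≤ E.card :=
      fun E hE => card_pos.mpr ⟨v', (h𝒟mem E hE).2⟩
    -- the main contradiction machine
    have main : ∀ F1 F2 F3 : Finset V, F1 ∈ 𝒟 → F2 ∈ 𝒟 → F3 ∈ 𝒟 →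
        F1 ≠ F2 → F1 ≠ F3 → F2 ≠ F3 →
        (C ∩ F1).card = 2 → (D ∩ F1).card = 2 →
        ((C ∩ F2).card = 2 ∨ (D ∩ F2).card = 2) → False := by
      intro F1 F2 F3 hF1 hF2 hF3 d12 d13 d23 hp hq hor
      have e1 := hCEeq F1 hF1 hp
      have e2 := hDEeq F1 hF1 hq
      have e3 : C.card + F2.card = k + 3 ∨ D.card + F2.card = k + 3 :=
        hor.imp (hCEeq F2 hF2) (hDEeq F2 hF2)
      have e4 := hsumgen F1 F2 F3 hF1 hF2 hF3 d12 d13 d23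
      have e5 := hpos F3 hF3
      omega
    -- assemble the numbers
    have hsum3 : ∑ E ∈ 𝒟, (S ∩ E).card =
        (S ∩ E1).card + (S ∩ E2).card + (S ∩ E3).card := by
      rw [h𝒟eq, Finset.sum_insert (by simp [h12, h13]),
        Finset.sum_insert (by simp [h23]), Finset.sum_singleton]
      ring
    have hs1 := hSE E1 hE1
    have hs2 := hSE E2 hE2
    have hs3 := hSE E3 hE3
    have hc1 := hCE2 E1 hE1
    have hc2 := hCE2 E2 hE2
    have hc3 := hCE2 E3 hE3
    have hd1 := hDE2 E1 hE1
    have hd2 := hDE2 E2 hE2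
    have hd3 := hDE2 E3 hE3
    have hbig : (C ∩ E1).card + (D ∩ E1).card ≥ 4 ∨
        (C ∩ E2).card + (D ∩ E2).card ≥ 4 ∨
        (C ∩ E3).card + (D ∩ E3).card ≥ 4 := by omega
    rcases hbig with h | h | h
    · have hrest : (C ∩ E2).card + (D ∩ E2).card ≥ 3 ∨
          (C ∩ E3).card + (D ∩ E3).card ≥ 3 := by omega
      rcases hrest with h' | h'
      · exact main E1 E2 E3 hE1 hE2 hE3 h12 h13 h23 (by omega) (by omega) (by omega)
      · exact main E1 E3 E2 hE1 hE3 hE2 h13 h12 (Ne.symm h23) (by omega) (by omega) (by omega)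
    · have hrest : (C ∩ E1).card + (D ∩ E1).card ≥ 3 ∨
          (C ∩ E3).card + (D ∩ E3).card ≥ 3 := by omega
      rcases hrest with h' | h'
      · exact main E2 E1 E3 hE2 hE1 hE3 (Ne.symm h12) h23 h13 (by omega) (by omega) (by omega)
      · exact main E2 E3 E1 hE2 hE3 hE1 h23 (Ne.symm h12) (Ne.symm h13) (by omega) (by omega) (by omega)
    · have hrest : (C ∩ E1).card + (D ∩ E1).card ≥ 3 ∨
          (C ∩ E2).card + (D ∩ E2).card ≥ 3 := by omega
      rcases hrest with h' | h'
      · exact main E3 E1 E2 hE3 hE1 hE2 (Ne.symm h13) (Ne.symm h23) h12 (by omega) (by omega) (by omega)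
      · exact main E3 E2 E1 hE3 hE2 hE1 (Ne.symm h23) (Ne.symm h13) (Ne.symm h12) (by omega) (by omega) (by omega)
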